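/- (de Bruijn–Erdős theorem, equality case) Let E be a set of n elements and 𝓛 a family of n proper subsets of E, each of size at least 2, such that every pair of distinct elements of E lies in exactly one member of 𝓛. Then either (i) 𝓛 is a near-pencil: up to relabeling, one line contains n − 1 points and the remaining n − 1 lines each consist of the remaining point together with one point of that line; or (ii) there is an integer k ≥ 3 with n = k(k−1)+1 such that every line has exactly k points and every point lies on exactly k lines (a projective plane). -/

import Mathlib

set_option linter.unusedSectionVars false
set_option maxHeartbeats 1000000

open Finset

section DBE
variable {α : Type*} [DecidableEq α]

/-- Two lines sharing two distinct points coincide. -/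
lemma dbe_line_eq (E : Finset α) (𝓛 : Finset (Finset α))
    (h𝓛 : ∀ l ∈ 𝓛, 2 ≤ l.card ∧ l ⊂ E)
    (hpair : ∀ x ∈ E, ∀ y ∈ E, x ≠ y → ∃! l, l ∈ 𝓛 ∧ x ∈ l ∧ y ∈ l)
    {l₁ l₂ : Finset α} (h1 : l₁ ∈ 𝓛) (h2 : l₂ ∈ 𝓛) {x y : α}
    (hxy : x ≠ y) (hx1 : x ∈ l₁) (hy1 : y ∈ l₁) (hx2 : x ∈ l₂) (hy2 : y ∈ l₂) :
    l₁ = l₂ := by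
  have hxE : x ∈ E := (h𝓛 l₁ h1).2.subset hx1
  have hyE : y ∈ E := (h𝓛 l₁ h1).2.subset hy1
  obtain ⟨l, -, hu⟩ := hpair x hxE y hyE hxy
  rw [hu l₁ ⟨h1, hx1, hy1⟩, hu l₂ ⟨h2, hx2, hy2⟩]

/-- For a point off a line, the number of lines through the point is at least the
size of the line. -/
lemma dbe_card_le (E : Finset α) (𝓛 : Finset (Finset α))
    (h𝓛 : ∀ l ∈ 𝓛, 2 ≤ l.card ∧ l ⊂ E)
    (hpair : ∀ x ∈ E, ∀ y ∈ E, x ≠ y → ∃! l, l ∈ 𝓛 ∧ x ∈ l ∧ y ∈ l)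
    {p : α} {l : Finset α} (hp : p ∈ E) (hl : l ∈ 𝓛) (hpl : p ∉ l) :
    l.card ≤ (𝓛.filter (fun m => p ∈ m)).card := by
  have H : ∀ x : α, ∃ m, x ∈ l → m ∈ 𝓛 ∧ p ∈ m ∧ x ∈ m := by
    intro x
    by_cases hx : x ∈ l
    · have hxE : x ∈ E := (h𝓛 l hl).2.subset hx
      have hxp : p ≠ x := fun h => hpl (h ▸ hx)
      obtain ⟨m, hm, -⟩ := hpair p hp x hxE hxp
      exact ⟨m, fun _ => hm⟩
    · exact ⟨∅, fun h => absurd h hx⟩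
  choose f hf using H
  apply Finset.card_le_card_of_injOn f
  · intro x hx
    exact mem_filter.2 ⟨(hf x hx).1, (hf x hx).2.1⟩
  · intro x hx y hy hfxy
    by_contra hne
    have h1 := hf x hx
    have h2 := hf y hy
    have : f x = l := dbe_line_eq E 𝓛 h𝓛 hpair h1.1 hl hne h1.2.2 (hfxy ▸ h2.2.2) hx hy
    exact hpl (this ▸ h1.2.1)

/-- Refined version: if moreover `m` is a line through `p` disjoint from `l`,
the joining lines avoid `m`. -/
lemma dbe_card_le_erase (E : Finset α) (𝓛 : Finset (Finset α))
    (h𝓛 : ∀ l ∈ 𝓛, 2 ≤ l.card ∧ l ⊂ E)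
    (hpair : ∀ x ∈ E, ∀ y ∈ E, x ≠ y → ∃! l, l ∈ 𝓛 ∧ x ∈ l ∧ y ∈ l)
    {p : α} {l m : Finset α} (hp : p ∈ E) (hl : l ∈ 𝓛) (hpl : p ∉ l)
    (hdisj : ∀ x ∈ l, x ∉ m) :
    l.card ≤ ((𝓛.filter (fun m => p ∈ m)).erase m).card := by
  have H : ∀ x : α, ∃ m, x ∈ l → m ∈ 𝓛 ∧ p ∈ m ∧ x ∈ m := by
    intro x
    by_cases hx : x ∈ l
    · have hxE : x ∈ E := (h𝓛 l hl).2.subset hx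
      have hxp : p ≠ x := fun h => hpl (h ▸ hx)
      obtain ⟨m, hm, -⟩ := hpair p hp x hxE hxp
      exact ⟨m, fun _ => hm⟩
    · exact ⟨∅, fun h => absurd h hx⟩
  choose f hf using H
  apply Finset.card_le_card_of_injOn f
  · intro x hx
    refine mem_erase.2 ⟨?_, mem_filter.2 ⟨(hf x hx).1, (hf x hx).2.1⟩⟩
    intro hfm
    exact hdisj x hx (hfm ▸ (hf x hx).2.2)
  · intro x hx y hy hfxy
    by_contra hne
    have h1 := hf x hx
    have h2 := hf y hy
    have : f x = l := dbe_line_eq E 𝓛 h𝓛 hpair h1.1 hl hne h1.2.2 (hfxy ▸ h2.2.2) hx hy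
    exact hpl (this ▸ h1.2.1)

/-- Every point misses some line. -/
lemma dbe_exists_avoid (E : Finset α) (𝓛 : Finset (Finset α))
    (h𝓛 : ∀ l ∈ 𝓛, 2 ≤ l.card ∧ l ⊂ E)
    (hpair : ∀ x ∈ E, ∀ y ∈ E, x ≠ y → ∃! l, l ∈ 𝓛 ∧ x ∈ l ∧ y ∈ l)
    (hL : 𝓛.Nonempty) {p : α} (hp : p ∈ E) :
    ∃ l ∈ 𝓛, p ∉ l := by
  by_contra hall
  push_neg at hall
  obtain ⟨l₀, hl₀⟩ := hL
  obtain ⟨x, hxl₀, hxp⟩ : ∃ x ∈ l₀, x ≠ p := by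
    obtain ⟨a, ha, b, hb, hab⟩ := Finset.one_lt_card.1 (lt_of_lt_of_le one_lt_two (h𝓛 l₀ hl₀).1)
    rcases eq_or_ne a p with rfl | h
    · exact ⟨b, hb, fun h => hab h.symm⟩
    · exact ⟨a, ha, h⟩
  obtain ⟨q, hqE, hql₀⟩ : ∃ q ∈ E, q ∉ l₀ := by
    obtain ⟨q, hq⟩ := Finset.exists_of_ssubset (h𝓛 l₀ hl₀).2
    exact ⟨q, hq.1, hq.2⟩
  have hxE : x ∈ E := (h𝓛 l₀ hl₀).2.subset hxl₀
  have hxq : x ≠ q := fun h => hql₀ (h ▸ hxl₀)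
  obtain ⟨m, ⟨hm𝓛, hxm, hqm⟩, -⟩ := hpair x hxE q hqE hxq
  have hpm : p ∈ m := hall m hm𝓛
  have hpl₀ : p ∈ l₀ := hall l₀ hl₀
  have : m = l₀ := dbe_line_eq E 𝓛 h𝓛 hpair hm𝓛 hl₀ hxp hxm hpm hxl₀ hpl₀
  exact hql₀ (this ▸ hqm)

/-- The lines through a point partition the rest: sum of (card - 1) over lines through p. -/
lemma dbe_degree (E : Finset α) (𝓛 : Finset (Finset α))
    (h𝓛 : ∀ l ∈ 𝓛, 2 ≤ l.card ∧ l ⊂ E)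
    (hpair : ∀ x ∈ E, ∀ y ∈ E, x ≠ y → ∃! l, l ∈ 𝓛 ∧ x ∈ l ∧ y ∈ l)
    {p : α} (hp : p ∈ E) :
    ∑ l ∈ 𝓛.filter (fun m => p ∈ m), (l.card - 1) = E.card - 1 := by
  have hbU : (𝓛.filter (fun m => p ∈ m)).biUnion (fun l => l.erase p) = E.erase p := by
    apply Finset.Subset.antisymm
    · intro q hq
      obtain ⟨l, hl, hql⟩ := Finset.mem_biUnion.1 hq
      have hl' := Finset.mem_filter.1 hl
      exact mem_erase.2 ⟨(mem_erase.1 hql).1, (h𝓛 l hl'.1).2.subset (mem_erase.1 hql).2⟩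
    · intro q hq
      obtain ⟨hqp, hqE⟩ := mem_erase.1 hq
      obtain ⟨m, ⟨hm𝓛, hpm, hqm⟩, -⟩ := hpair p hp q hqE (Ne.symm hqp)
      exact Finset.mem_biUnion.2 ⟨m, Finset.mem_filter.2 ⟨hm𝓛, hpm⟩, mem_erase.2 ⟨hqp, hqm⟩⟩
  have hdisj : ∀ l₁ ∈ 𝓛.filter (fun m => p ∈ m), ∀ l₂ ∈ 𝓛.filter (fun m => p ∈ m),
      l₁ ≠ l₂ → Disjoint (l₁.erase p) (l₂.erase p) := by
    intro l₁ h1 l₂ h2 hne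
    have h1' := Finset.mem_filter.1 h1
    have h2' := Finset.mem_filter.1 h2
    rw [Finset.disjoint_left]
    intro q hq1 hq2
    obtain ⟨hqp, hq1'⟩ := mem_erase.1 hq1
    obtain ⟨-, hq2'⟩ := mem_erase.1 hq2
    exact hne (dbe_line_eq E 𝓛 h𝓛 hpair h1'.1 h2'.1 (Ne.symm hqp) h1'.2 hq1' h2'.2 hq2')
  have := Finset.card_biUnion hdisj
  rw [hbU, Finset.card_erase_of_mem hp] at this
  rw [this]
  apply Finset.sum_congr rfl
  intro l hl
  rw [Finset.card_erase_of_mem (Finset.mem_filter.1 hl).2]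

/-- If some line has `n - 1` points we get a near-pencil. -/
lemma dbe_near_pencil (E : Finset α) (𝓛 : Finset (Finset α)) (n : ℕ)
    (hn : E.card = n) (hn3 : 3 ≤ n)
    (h𝓛 : ∀ l ∈ 𝓛, 2 ≤ l.card ∧ l ⊂ E)
    (hpair : ∀ x ∈ E, ∀ y ∈ E, x ≠ y → ∃! l, l ∈ 𝓛 ∧ x ∈ l ∧ y ∈ l)
    {l₀ : Finset α} (hl₀ : l₀ ∈ 𝓛) (hcard : l₀.card = n - 1) :
    ∃ z ∈ E, ∃ l₀ ∈ 𝓛, l₀ = E.erase z ∧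
      ∀ l ∈ 𝓛, l ≠ l₀ → ∃ x ∈ E.erase z, l = {z, x} := by
  have hsub : l₀ ⊆ E := (h𝓛 l₀ hl₀).2.subset
  have hcd : (E \ l₀).card = 1 := by
    rw [Finset.card_sdiff_of_subset hsub, hn, hcard]; omega
  obtain ⟨z, hz⟩ := Finset.card_eq_one.1 hcd
  have hzE : z ∈ E := by
    have : z ∈ E \ l₀ := hz ▸ Finset.mem_singleton_self z
    exact (Finset.mem_sdiff.1 this).1
  have hzl₀ : z ∉ l₀ := by
    have : z ∈ E \ l₀ := hz ▸ Finset.mem_singleton_self z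
    exact (Finset.mem_sdiff.1 this).2
  have hl₀eq : l₀ = E.erase z := by
    have h1 : E \ (E \ l₀) = l₀ := Finset.sdiff_sdiff_eq_self hsub
    rw [hz] at h1
    rw [← h1, Finset.erase_eq]
  refine ⟨z, hzE, l₀, hl₀, hl₀eq, ?_⟩
  intro l hl hne
  -- z ∈ l
  have hzl : z ∈ l := by
    by_contra hzl
    have hsubl : l ⊆ l₀ := by
      intro w hw
      rw [hl₀eq]
      exact mem_erase.2 ⟨fun h => hzl (h ▸ hw), (h𝓛 l hl).2.subset hw⟩
    obtain ⟨a, ha, b, hb, hab⟩ := Finset.one_lt_card.1 (lt_of_lt_of_le one_lt_two (h𝓛 l hl).1)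
    exact hne (dbe_line_eq E 𝓛 h𝓛 hpair hl hl₀ hab ha hb (hsubl ha) (hsubl hb))
  obtain ⟨x, hxl, hxz⟩ : ∃ x ∈ l, x ≠ z := by
    obtain ⟨a, ha, b, hb, hab⟩ := Finset.one_lt_card.1 (lt_of_lt_of_le one_lt_two (h𝓛 l hl).1)
    rcases eq_or_ne a z with rfl | h
    · exact ⟨b, hb, fun h => hab h.symm⟩
    · exact ⟨a, ha, h⟩
  have hxE : x ∈ E := (h𝓛 l hl).2.subset hxl
  refine ⟨x, mem_erase.2 ⟨hxz, hxE⟩, ?_⟩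
  apply Finset.Subset.antisymm
  · intro w hw
    rcases eq_or_ne w z with rfl | hwz
    · exact Finset.mem_insert_self _ _
    rcases eq_or_ne w x with rfl | hwx
    · exact Finset.mem_insert_of_mem (Finset.mem_singleton_self _)
    exfalso
    have hwl₀ : w ∈ l₀ := by
      rw [hl₀eq]; exact mem_erase.2 ⟨hwz, (h𝓛 l hl).2.subset hw⟩
    have hxl₀ : x ∈ l₀ := by
      rw [hl₀eq]; exact mem_erase.2 ⟨hxz, hxE⟩
    exact hne (dbe_line_eq E 𝓛 h𝓛 hpair hl hl₀ hwx hw hxl hwl₀ hxl₀)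
  · intro w hw
    rcases Finset.mem_insert.1 hw with rfl | hw'
    · exact hzl
    · rw [Finset.mem_singleton.1 hw']; exact hxl

/-- Equality case of the counting: for every non-incident point–line pair,
the number of lines through the point equals the size of the line. -/
lemma dbe_reg (E : Finset α) (𝓛 : Finset (Finset α)) (n : ℕ)
    (hn : E.card = n) (hm : 𝓛.card = n) (hn3 : 3 ≤ n)
    (h𝓛 : ∀ l ∈ 𝓛, 2 ≤ l.card ∧ l ⊂ E)
    (hpair : ∀ x ∈ E, ∀ y ∈ E, x ≠ y → ∃! l, l ∈ 𝓛 ∧ x ∈ l ∧ y ∈ l) :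
    ∀ p ∈ E, ∀ l ∈ 𝓛, p ∉ l → (𝓛.filter (fun m => p ∈ m)).card = l.card := by
  classical
  set r : α → ℕ := fun p => (𝓛.filter (fun m => p ∈ m)).card with hr
  have hLne : 𝓛.Nonempty := Finset.card_pos.1 (by omega)
  have hk_lt : ∀ l ∈ 𝓛, l.card < n := fun l hl => hn ▸ Finset.card_lt_card (h𝓛 l hl).2
  have hr_lt : ∀ p ∈ E, r p < n := by
    intro p hp
    obtain ⟨l, hl, hpl⟩ := dbe_exists_avoid E 𝓛 h𝓛 hpair hLne hp
    rw [← hm]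
    apply Finset.card_lt_card
    rw [Finset.ssubset_iff_of_subset (Finset.filter_subset _ _)]
    exact ⟨l, hl, by simp [hpl]⟩
  have hcE : ∀ l ∈ 𝓛, (E.filter (fun p => p ∉ l)).card = n - l.card := by
    intro l hl
    have he : E.filter (fun p => p ∉ l) = E \ l := by
      ext w; simp [Finset.mem_sdiff]
    rw [he, Finset.card_sdiff_of_subset (h𝓛 l hl).2.subset, hn]
  have hcL : ∀ p : α, (𝓛.filter (fun m => p ∉ m)).card = n - r p := by
    intro p
    have := Finset.card_filter_add_card_filter_not (s := 𝓛) (p := fun m => p ∈ m)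
    simp only [hr]
    omega
  -- the two total sums
  have key : ∑ p ∈ E, ∑ l ∈ 𝓛.filter (fun m => p ∉ m),
      (((n : ℚ) - r p)⁻¹ - ((n : ℚ) - l.card)⁻¹) = 0 := by
    rw [Finset.sum_congr rfl (fun p _ => Finset.sum_sub_distrib _ _)]
    rw [Finset.sum_sub_distrib]
    have h1 : ∑ p ∈ E, ∑ _l ∈ 𝓛.filter (fun m => p ∉ m), ((n : ℚ) - r p)⁻¹ = n := by
      have : ∀ p ∈ E, ∑ _l ∈ 𝓛.filter (fun m => p ∉ m), ((n : ℚ) - r p)⁻¹ = 1 := by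
        intro p hp
        rw [Finset.sum_const, hcL p, nsmul_eq_mul]
        have hlt := hr_lt p hp
        have hcast : ((n - r p : ℕ) : ℚ) = (n : ℚ) - r p := by
          push_cast [Nat.cast_sub (le_of_lt hlt)]; ring
        rw [hcast]
        apply mul_inv_cancel₀
        have : (r p : ℚ) < n := by exact_mod_cast hlt
        linarith
      rw [Finset.sum_congr rfl this, Finset.sum_const, hn, nsmul_eq_mul, mul_one]
    have h2 : ∑ p ∈ E, ∑ l ∈ 𝓛.filter (fun m => p ∉ m), ((n : ℚ) - l.card)⁻¹ = n := by
      rw [Finset.sum_comm' (s := E) (t := fun p => 𝓛.filter (fun m => p ∉ m)) (t' := 𝓛)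
        (s' := fun l => E.filter (fun p => p ∉ l))
        (fun p l => by simp only [Finset.mem_filter]; tauto)]
      have : ∀ l ∈ 𝓛, ∑ _p ∈ E.filter (fun p => p ∉ l), ((n : ℚ) - l.card)⁻¹ = 1 := by
        intro l hl
        rw [Finset.sum_const, hcE l hl, nsmul_eq_mul]
        have hlt := hk_lt l hl
        have hcast : ((n - l.card : ℕ) : ℚ) = (n : ℚ) - l.card := by
          push_cast [Nat.cast_sub (le_of_lt hlt)]; ring
        rw [hcast]
        apply mul_inv_cancel₀
        have : (l.card : ℚ) < n := by exact_mod_cast hlt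
        linarith
      rw [Finset.sum_congr rfl this, Finset.sum_const, hm, nsmul_eq_mul, mul_one]
    rw [h1, h2, sub_self]
  -- termwise nonnegativity
  have hnonneg : ∀ p ∈ E, ∀ l ∈ 𝓛.filter (fun m => p ∉ m),
      0 ≤ ((n : ℚ) - r p)⁻¹ - ((n : ℚ) - l.card)⁻¹ := by
    intro p hp l hl'
    obtain ⟨hl, hpl⟩ := Finset.mem_filter.1 hl'
    have h1 : l.card ≤ r p := dbe_card_le E 𝓛 h𝓛 hpair hp hl hpl
    have h2 := hr_lt p hp
    have hb1 : (0 : ℚ) < (n : ℚ) - r p := by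
      have : (r p : ℚ) < n := by exact_mod_cast h2
      linarith
    have hb2 : ((n : ℚ) - r p) ≤ (n : ℚ) - l.card := by
      have : (l.card : ℚ) ≤ r p := by exact_mod_cast h1
      linarith
    have := one_div_le_one_div_of_le hb1 hb2
    rw [one_div, one_div] at this
    linarith
  -- conclude each term is zero
  intro p hp l hl hpl
  have houter := (Finset.sum_eq_zero_iff_of_nonneg
    (fun p hp => Finset.sum_nonneg (hnonneg p hp))).1 key p hp
  have hinner := (Finset.sum_eq_zero_iff_of_nonneg (hnonneg p hp)).1 houter l
    (Finset.mem_filter.2 ⟨hl, hpl⟩)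
  have heq : ((n : ℚ) - r p)⁻¹ = ((n : ℚ) - l.card)⁻¹ := by linarith [hinner]
  have heq2 : (n : ℚ) - r p = (n : ℚ) - l.card := inv_injective heq
  have : (r p : ℚ) = (l.card : ℚ) := by linarith
  exact_mod_cast this

end DBE

theorem deBruijnErdos_equality_case {α : Type*} [DecidableEq α]
    (E : Finset α) (𝓛 : Finset (Finset α)) (n : ℕ)
    (hn : E.card = n) (hm : 𝓛.card = n) (hn3 : 3 ≤ n)
    (h𝓛 : ∀ l ∈ 𝓛, 2 ≤ l.card ∧ l ⊂ E)
    (hpair : ∀ x ∈ E, ∀ y ∈ E, x ≠ y → ∃! l, l ∈ 𝓛 ∧ x ∈ l ∧ y ∈ l) :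
    (∃ z ∈ E, ∃ l₀ ∈ 𝓛, l₀ = E.erase z ∧
        ∀ l ∈ 𝓛, l ≠ l₀ → ∃ x ∈ E.erase z, l = {z, x}) ∨
    (∃ k : ℕ, 3 ≤ k ∧ n = k * (k - 1) + 1 ∧
        (∀ l ∈ 𝓛, l.card = k) ∧
        (∀ z ∈ E, (𝓛.filter (fun l => z ∈ l)).card = k)) := by
  classical
  have hLne : 𝓛.Nonempty := Finset.card_pos.1 (by omega)
  have hEne : E.Nonempty := Finset.card_pos.1 (by omega)
  have hreg := dbe_reg E 𝓛 n hn hm hn3 h𝓛 hpair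
  by_cases huni : ∀ l ∈ 𝓛, ∀ l' ∈ 𝓛, l.card = l'.card
  · -- all lines have the same size k
    obtain ⟨l₀, hl₀⟩ := hLne
    set k := l₀.card with hk
    have hall : ∀ l ∈ 𝓛, l.card = k := fun l hl => huni l hl l₀ hl₀
    by_cases hkn : k = n - 1
    · exact Or.inl (dbe_near_pencil E 𝓛 n hn hn3 h𝓛 hpair hl₀ hkn)
    · right
      have hrall : ∀ p ∈ E, (𝓛.filter (fun m => p ∈ m)).card = k := by
        intro p hp
        obtain ⟨l, hl, hpl⟩ := dbe_exists_avoid E 𝓛 h𝓛 hpair (Finset.card_pos.1 (by omega)) hp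
        rw [hreg p hp l hl hpl, hall l hl]
      obtain ⟨p, hp⟩ := hEne
      have hdeg := dbe_degree E 𝓛 h𝓛 hpair hp
      have hsum : ∑ l ∈ 𝓛.filter (fun m => p ∈ m), (l.card - 1)
          = (𝓛.filter (fun m => p ∈ m)).card * (k - 1) := by
        rw [Finset.sum_congr rfl
          (fun l hl => by rw [hall l (Finset.mem_filter.1 hl).1]),
          Finset.sum_const, smul_eq_mul]
      rw [hsum, hrall p hp, hn] at hdeg
      have hk2 : 2 ≤ k := (h𝓛 l₀ hl₀).1
      have hk3 : 3 ≤ k := by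
        by_contra h
        have hk2' : k = 2 := by omega
        rw [hk2'] at hdeg hkn
        omega
      exact ⟨k, hk3, by omega, hall, hrall⟩
  · -- two lines of different sizes: near-pencil
    left
    push_neg at huni
    obtain ⟨l₁, hl₁, l₂, hl₂, hk12⟩ := huni
    have hne12 : l₁ ≠ l₂ := fun h => hk12 (h ▸ rfl)
    have hcover : ∀ p ∈ E, p ∈ l₁ ∨ p ∈ l₂ := by
      intro p hp
      by_contra h
      push_neg at h
      exact hk12 ((hreg p hp l₁ hl₁ h.1).symm.trans (hreg p hp l₂ hl₂ h.2))
    have hint1 : (l₁ ∩ l₂).card ≤ 1 := by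
      by_contra h
      push_neg at h
      obtain ⟨a, ha, b, hb, hab⟩ := Finset.one_lt_card.1 h
      simp only [Finset.mem_inter] at ha hb
      exact hne12 (dbe_line_eq E 𝓛 h𝓛 hpair hl₁ hl₂ hab ha.1 hb.1 ha.2 hb.2)
    have hint0 : (l₁ ∩ l₂).Nonempty := by
      rw [← Finset.card_pos]
      by_contra h
      have hdisj : ∀ x ∈ l₂, x ∉ l₁ := by
        intro x hx hx1
        exact h (Finset.card_pos.2 ⟨x, Finset.mem_inter.2 ⟨hx1, hx⟩⟩)
      obtain ⟨p, hp1⟩ := Finset.card_pos.1 (by linarith [(h𝓛 l₁ hl₁).1] : 0 < l₁.card)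
      have hpE : p ∈ E := (h𝓛 l₁ hl₁).2.subset hp1
      have hpl₂ : p ∉ l₂ := fun hx => hdisj p hx hp1
      have h1 := dbe_card_le_erase E 𝓛 h𝓛 hpair hpE hl₂ hpl₂ hdisj
      rw [Finset.card_erase_of_mem (Finset.mem_filter.2 ⟨hl₁, hp1⟩)] at h1
      have h2 := hreg p hpE l₂ hl₂ hpl₂
      have h3 := (h𝓛 l₂ hl₂).1
      omega
    obtain ⟨z, hz⟩ := Finset.card_eq_one.1 (le_antisymm hint1 (Finset.card_pos.2 hint0))
    have hmemz : z ∈ l₁ ∩ l₂ := by rw [hz]; exact Finset.mem_singleton_self z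
    have hz1 : z ∈ l₁ := (Finset.mem_inter.1 hmemz).1
    have hz2 : z ∈ l₂ := (Finset.mem_inter.1 hmemz).2
    have honly : ∀ x, x ∈ l₁ → x ∈ l₂ → x = z := by
      intro x h1 h2
      have : x ∈ l₁ ∩ l₂ := Finset.mem_inter.2 ⟨h1, h2⟩
      rw [hz] at this
      exact Finset.mem_singleton.1 this
    -- structure of the other lines
    have hC : ∀ l ∈ 𝓛, l ≠ l₁ → l ≠ l₂ → ∃ p ∈ l₁.erase z, ∃ q ∈ l₂.erase z, l = {p, q} := by
      intro l hl hne1 hne2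
      have hzl : z ∉ l := by
        intro hzl
        obtain ⟨x, hxl, hxz⟩ : ∃ x ∈ l, x ≠ z := by
          obtain ⟨a, ha, b, hb, hab⟩ :=
            Finset.one_lt_card.1 (lt_of_lt_of_le one_lt_two (h𝓛 l hl).1)
          rcases eq_or_ne a z with rfl | h
          · exact ⟨b, hb, fun h => hab h.symm⟩
          · exact ⟨a, ha, h⟩
        have hxE : x ∈ E := (h𝓛 l hl).2.subset hxl
        rcases hcover x hxE with hx1 | hx2
        · exact hne1 (dbe_line_eq E 𝓛 h𝓛 hpair hl hl₁ hxz hxl hzl hx1 hz1)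
        · exact hne2 (dbe_line_eq E 𝓛 h𝓛 hpair hl hl₂ hxz hxl hzl hx2 hz2)
      have hi1 : (l ∩ l₁).card ≤ 1 := by
        by_contra h
        push_neg at h
        obtain ⟨a, ha, b, hb, hab⟩ := Finset.one_lt_card.1 h
        simp only [Finset.mem_inter] at ha hb
        exact hne1 (dbe_line_eq E 𝓛 h𝓛 hpair hl hl₁ hab ha.1 hb.1 ha.2 hb.2)
      have hi2 : (l ∩ l₂).card ≤ 1 := by
        by_contra h
        push_neg at h
        obtain ⟨a, ha, b, hb, hab⟩ := Finset.one_lt_card.1 h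
        simp only [Finset.mem_inter] at ha hb
        exact hne2 (dbe_line_eq E 𝓛 h𝓛 hpair hl hl₂ hab ha.1 hb.1 ha.2 hb.2)
      have hsubu : l ⊆ l₁ ∪ l₂ := fun x hx =>
        Finset.mem_union.2 (hcover x ((h𝓛 l hl).2.subset hx))
      have hdecomp : l = (l ∩ l₁) ∪ (l ∩ l₂) := by
        rw [← Finset.inter_union_distrib_left]
        exact (Finset.inter_eq_left.2 hsubu).symm
      have hle : l.card ≤ (l ∩ l₁).card + (l ∩ l₂).card := by
        calc l.card = ((l ∩ l₁) ∪ (l ∩ l₂)).card := by rw [← hdecomp]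
        _ ≤ _ := Finset.card_union_le _ _
      have h2l := (h𝓛 l hl).1
      have h1' : (l ∩ l₁).card = 1 := by omega
      have h2' : (l ∩ l₂).card = 1 := by omega
      obtain ⟨p, hp⟩ := Finset.card_eq_one.1 h1'
      obtain ⟨q, hq⟩ := Finset.card_eq_one.1 h2'
      have hpl : p ∈ l ∧ p ∈ l₁ := by
        have : p ∈ l ∩ l₁ := by rw [hp]; exact Finset.mem_singleton_self p
        exact Finset.mem_inter.1 this
      have hql : q ∈ l ∧ q ∈ l₂ := by
        have : q ∈ l ∩ l₂ := by rw [hq]; exact Finset.mem_singleton_self q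
        exact Finset.mem_inter.1 this
      have hpz : p ≠ z := fun h => hzl (h ▸ hpl.1)
      have hqz : q ≠ z := fun h => hzl (h ▸ hql.1)
      refine ⟨p, Finset.mem_erase.2 ⟨hpz, hpl.2⟩, q, Finset.mem_erase.2 ⟨hqz, hql.2⟩, ?_⟩
      rw [hdecomp, hp, hq]
      ext w; simp [or_comm]
    -- every such pair gives a line
    have hD : ∀ p ∈ l₁.erase z, ∀ q ∈ l₂.erase z, {p, q} ∈ 𝓛 := by
      intro p hp q hq
      obtain ⟨hpz, hp1⟩ := Finset.mem_erase.1 hp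
      obtain ⟨hqz, hq2⟩ := Finset.mem_erase.1 hq
      have hpq : p ≠ q := fun h => hpz (honly p hp1 (h ▸ hq2))
      have hpE : p ∈ E := (h𝓛 l₁ hl₁).2.subset hp1
      have hqE : q ∈ E := (h𝓛 l₂ hl₂).2.subset hq2
      obtain ⟨m, ⟨hm𝓛, hpm, hqm⟩, -⟩ := hpair p hpE q hqE hpq
      have hmn1 : m ≠ l₁ := fun h => hqz (honly q (h ▸ hqm) hq2)
      have hmn2 : m ≠ l₂ := fun h => hpz (honly p hp1 (h ▸ hpm))
      obtain ⟨p', hp', q', hq', hmeq⟩ := hC m hm𝓛 hmn1 hmn2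
      obtain ⟨hpz', hp1'⟩ := Finset.mem_erase.1 hp'
      obtain ⟨hqz', hq2'⟩ := Finset.mem_erase.1 hq'
      have hpp' : p = p' := by
        rcases Finset.mem_insert.1 (hmeq ▸ hpm) with h | h
        · exact h
        · rw [Finset.mem_singleton.1 h] at hpz hp1 ⊢
          exact absurd (honly q' hp1 hq2') hqz'
      have hqq' : q = q' := by
        rcases Finset.mem_insert.1 (hmeq ▸ hqm) with h | h
        · rw [h] at hqz hq2
          exact absurd (honly p' hp1' hq2) hpz'
        · exact Finset.mem_singleton.1 h
      rw [hpp', hqq', ← hmeq]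
      exact hm𝓛
    -- the counting bijection
    have hcount : (l₁.card - 1) * (l₂.card - 1) = n - 2 := by
      have hbij : ((l₁.erase z) ×ˢ (l₂.erase z)).card = ((𝓛.erase l₁).erase l₂).card := by
        apply Finset.card_bij (fun pq _ => ({pq.1, pq.2} : Finset α))
        · rintro ⟨p, q⟩ hpq
          obtain ⟨hp, hq⟩ := Finset.mem_product.1 hpq
          obtain ⟨hpz, hp1⟩ := Finset.mem_erase.1 hp
          obtain ⟨hqz, hq2⟩ := Finset.mem_erase.1 hq
          refine Finset.mem_erase.2 ⟨?_, Finset.mem_erase.2 ⟨?_, hD p hp q hq⟩⟩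
          · intro h
            have : p ∈ l₂ := h ▸ Finset.mem_insert_self p {q}
            exact hpz (honly p hp1 this)
          · intro h
            have : q ∈ l₁ := h ▸ Finset.mem_insert_of_mem (Finset.mem_singleton_self q)
            exact hqz (honly q this hq2)
        · rintro ⟨p, q⟩ hpq ⟨p', q'⟩ hpq' heq
          obtain ⟨hp, hq⟩ := Finset.mem_product.1 hpq
          obtain ⟨hp', hq'⟩ := Finset.mem_product.1 hpq'
          obtain ⟨hpz, hp1⟩ := Finset.mem_erase.1 hp
          obtain ⟨hqz, hq2⟩ := Finset.mem_erase.1 hq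
          obtain ⟨hpz', hp1'⟩ := Finset.mem_erase.1 hp'
          obtain ⟨hqz', hq2'⟩ := Finset.mem_erase.1 hq'
          have hpp : p = p' := by
            have hmem : p ∈ ({p', q'} : Finset α) := heq ▸ Finset.mem_insert_self p {q}
            rcases Finset.mem_insert.1 hmem with h | h
            · exact h
            · rw [Finset.mem_singleton.1 h] at hpz hp1
              exact absurd (honly q' hp1 hq2') hqz'
          have hqq : q = q' := by
            have hmem : q ∈ ({p', q'} : Finset α) :=
              heq ▸ Finset.mem_insert_of_mem (Finset.mem_singleton_self q)
            rcases Finset.mem_insert.1 hmem with h | h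
            · rw [h] at hqz hq2
              exact absurd (honly p' hp1' hq2) hpz'
            · exact Finset.mem_singleton.1 h
          exact Prod.ext hpp hqq
        · intro l hl'
          obtain ⟨hne2, hl''⟩ := Finset.mem_erase.1 hl'
          obtain ⟨hne1, hl⟩ := Finset.mem_erase.1 hl''
          obtain ⟨p, hp, q, hq, hleq⟩ := hC l hl hne1 hne2
          exact ⟨(p, q), Finset.mem_product.2 ⟨hp, hq⟩, hleq.symm⟩
      rw [Finset.card_product, Finset.card_erase_of_mem hz1, Finset.card_erase_of_mem hz2,
        Finset.card_erase_of_mem (Finset.mem_erase.2 ⟨hne12.symm, hl₂⟩),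
        Finset.card_erase_of_mem hl₁, hm] at hbij
      exact hbij
    -- size count : E = l₁ ∪ l₂
    have hEun : E = l₁ ∪ l₂ := by
      apply Finset.Subset.antisymm
      · intro x hx
        exact Finset.mem_union.2 (hcover x hx)
      · exact Finset.union_subset (h𝓛 l₁ hl₁).2.subset (h𝓛 l₂ hl₂).2.subset
    have hsum : l₁.card + l₂.card = n + 1 := by
      have := Finset.card_union_add_card_inter l₁ l₂
      rw [← hEun, hn, hz, Finset.card_singleton] at this
      omega
    have hc1 := (h𝓛 l₁ hl₁).1
    have hc2 := (h𝓛 l₂ hl₂).1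
    -- arithmetic : one of the lines has 2 points, the other n - 1
    have h2or : l₁.card = 2 ∨ l₂.card = 2 := by
      by_contra h
      push_neg at h
      set a := l₁.card - 1 with ha
      set b := l₂.card - 1 with hb
      have ha2 : 2 ≤ a := by omega
      have hb2 : 2 ≤ b := by omega
      have h1 : a * b = n - 2 := hcount
      have h2 : a + b = n - 1 := by omega
      have h3 : 2 * b ≤ a * b := Nat.mul_le_mul_right b ha2
      have h4 : 2 * a ≤ a * b := by
        calc 2 * a = a * 2 := by ring
        _ ≤ a * b := Nat.mul_le_mul_left a hb2
      have h5 : a * b + 1 = a + b := by omega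
      omega
    rcases h2or with h2 | h2
    · have : l₂.card = n - 1 := by omega
      exact dbe_near_pencil E 𝓛 n hn hn3 h𝓛 hpair hl₂ this
    · have : l₁.card = n - 1 := by omega
      exact dbe_near_pencil E 𝓛 n hn hn3 h𝓛 hpair hl₁ this
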